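/- Let T ∈ B(H) satisfy Δ = T*T − I ≥ 0, and let L = (T*T)⁻¹T* be the left inverse of T with ker L = ker T*. Then the smallest closed T*-invariant subspace containing ran Δ equals the smallest closed L-invariant subspace containing ran Δ. -/

import Mathlib

open ContinuousLinearMap

/-- The smallest closed `A`-invariant subspace containing the range of `Δ`. -/
noncomputable def invSpan {H : Type*} [NormedAddCommGroup H] [InnerProductSpace ℂ H]
    (A Δ : H →L[ℂ] H) : Submodule ℂ H :=
  (Submodule.span ℂ (⋃ n : ℕ, ⇑(A ^ n) '' Set.range ⇑Δ)).topologicalClosure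

lemma mem_gen {H : Type*} [NormedAddCommGroup H] [InnerProductSpace ℂ H]
    (B Δ : H →L[ℂ] H) (y : H) :
    Δ y ∈ Submodule.span ℂ (⋃ n : ℕ, ⇑(B ^ n) '' Set.range ⇑Δ) :=
  Submodule.subset_span (Set.mem_iUnion.2 ⟨0, ⟨Δ y, ⟨y, rfl⟩, by simp⟩⟩)

lemma map_gen {H : Type*} [NormedAddCommGroup H] [InnerProductSpace ℂ H]
    (B Δ : H →L[ℂ] H) {x : H}
    (hx : x ∈ Submodule.span ℂ (⋃ n : ℕ, ⇑(B ^ n) '' Set.range ⇑Δ)) :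
    B x ∈ Submodule.span ℂ (⋃ n : ℕ, ⇑(B ^ n) '' Set.range ⇑Δ) := by
  induction hx using Submodule.span_induction with
  | mem x hx =>
    obtain ⟨_, ⟨n, rfl⟩, z, hz, rfl⟩ := hx
    exact Submodule.subset_span
      (Set.mem_iUnion.2 ⟨n + 1, z, hz, by simp [pow_succ', mul_apply]⟩)
  | zero => simp
  | add a b ha hb iha ihb => simpa using Submodule.add_mem _ iha ihb
  | smul c a ha iha => simpa using Submodule.smul_mem _ c iha

theorem stmt5 {H : Type*} [NormedAddCommGroup H] [InnerProductSpace ℂ H] [CompleteSpace H]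
    (T S : H →L[ℂ] H) (hexp : ∀ x : H, ‖x‖ ≤ ‖T x‖)
    (hS1 : S ∘L (adjoint T ∘L T) = 1) (hS2 : (adjoint T ∘L T) ∘L S = 1) :
    invSpan (adjoint T) (adjoint T ∘L T - 1) =
      invSpan (S ∘L adjoint T) (adjoint T ∘L T - 1) := by
  set A := adjoint T with hA
  set Δ := adjoint T ∘L T - 1 with hΔ
  set L := S ∘L adjoint T with hL
  have hDS : Δ ∘L S = 1 - S := by
    rw [hΔ, sub_comp, hS2]
    ext x; simp
  have hSz : ∀ z : H, S z = z - Δ (S z) := by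
    intro z
    have h := ContinuousLinearMap.ext_iff.mp hDS z
    simp only [comp_apply, sub_apply, one_apply] at h
    rw [h]
    show S z = z - (z - S z)
    abel
  have hALp : A = L + Δ ∘L L := by
    rw [hL, ← comp_assoc, hDS, sub_comp]
    ext x; simp; rfl
  have hAx : ∀ x : H, A x = L x + Δ (L x) := by
    intro x
    conv_lhs => rw [hALp]
    simp [add_apply, comp_apply]
  have key : Submodule.span ℂ (⋃ n : ℕ, ⇑(A ^ n) '' Set.range ⇑Δ)
      = Submodule.span ℂ (⋃ n : ℕ, ⇑(L ^ n) '' Set.range ⇑Δ) := by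
    apply le_antisymm
    · rw [Submodule.span_le]
      rintro _ ⟨_, ⟨n, rfl⟩, y, ⟨w, rfl⟩, rfl⟩
      induction n with
      | zero => simpa using mem_gen L Δ w
      | succ n ih =>
        have h1 : (A ^ (n + 1)) (Δ w) = A ((A ^ n) (Δ w)) := by
          simp [pow_succ', mul_apply]
        rw [h1, hAx]
        exact Submodule.add_mem _ (map_gen L Δ ih) (mem_gen L Δ _)
    · rw [Submodule.span_le]
      rintro _ ⟨_, ⟨n, rfl⟩, y, ⟨w, rfl⟩, rfl⟩
      induction n with
      | zero => simpa using mem_gen A Δ w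
      | succ n ih =>
        have h1 : (L ^ (n + 1)) (Δ w) = L ((L ^ n) (Δ w)) := by
          simp [pow_succ', mul_apply]
        have h2 : L ((L ^ n) (Δ w)) = S (A ((L ^ n) (Δ w))) := by
          simp [hL, comp_apply]; rfl
        rw [h1, h2, hSz]
        exact Submodule.sub_mem _ (map_gen A Δ ih) (mem_gen A Δ _)
  unfold invSpan
  exact congrArg Submodule.topologicalClosure key
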